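/- Let F be a closed subset of ℝⁿ (with Lebesgue measure). Then the following are equivalent: (i) for every x ∈ F there is a sequence of measurable sets Aₙ of positive measure shrinking to x with ℓ(F∩Aₙ)/ℓ(Aₙ) → 1; (ii) for every x ∈ F and every open neighborhood U of x, ℓ(F ∩ U) > 0. -/

import Mathlib

open Filter Metric Topology MeasureTheory Set ENNReal

theorem quasiDense_iff (n : ℕ) (F : Set (EuclideanSpace ℝ (Fin n))) (hF : IsClosed F) :
    (∀ x ∈ F, ∃ A : ℕ → Set (EuclideanSpace ℝ (Fin n)),
        (∀ k, MeasurableSet (A k)) ∧ (∀ k, 0 < volume (A k)) ∧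
        (∀ U ∈ 𝓝 x, ∀ᶠ k in atTop, A k ⊆ U) ∧
        Tendsto (fun k => volume (F ∩ A k) / volume (A k)) atTop (𝓝 1)) ↔
    (∀ x ∈ F, ∀ U : Set (EuclideanSpace ℝ (Fin n)), IsOpen U → x ∈ U →
        0 < volume (F ∩ U)) := by
  constructor
  · intro h x hx U hU hxU
    obtain ⟨A, hmeas, hpos, hshrink, htend⟩ := h x hx
    have h1 : ∀ᶠ k in atTop, A k ⊆ U := hshrink U (hU.mem_nhds hxU)
    have h2 : ∀ᶠ k in atTop, (1:ℝ≥0∞)/2 < volume (F ∩ A k) / volume (A k) :=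
      htend.eventually (eventually_gt_nhds (by norm_num))
    obtain ⟨k, hkU, hk2⟩ := (h1.and h2).exists
    have hnum : 0 < volume (F ∩ A k) := by
      by_contra hc
      push_neg at hc
      have : volume (F ∩ A k) = 0 := le_antisymm hc zero_le
      rw [this, ENNReal.zero_div] at hk2
      simp at hk2
    exact hnum.trans_le (measure_mono (inter_subset_inter_right F hkU))
  · intro h x hx
    refine ⟨fun k => F ∩ ball x (1/(k+1)), fun k => hF.measurableSet.inter measurableSet_ball,
      fun k => h x hx _ isOpen_ball (mem_ball_self (by positivity)), ?_, ?_⟩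
    · intro U hU
      obtain ⟨ε, hε, hball⟩ := Metric.mem_nhds_iff.mp hU
      obtain ⟨k, hk⟩ := exists_nat_gt (1/ε)
      filter_upwards [eventually_ge_atTop k] with m hm
      refine inter_subset_right.trans ((ball_subset_ball ?_).trans hball)
      have hk' : (1:ℝ)/ε < m + 1 := hk.trans_le (by exact_mod_cast Nat.le_succ_of_le hm)
      rw [div_le_iff₀ (by positivity)]
      rw [div_lt_iff₀ hε] at hk'
      nlinarith
    · have heq : ∀ k : ℕ, volume (F ∩ (F ∩ ball x (1/(k+1)))) / volume (F ∩ ball x (1/(k+1))) = 1 := by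
        intro k
        rw [inter_eq_self_of_subset_right inter_subset_left]
        exact ENNReal.div_self (h x hx _ isOpen_ball (mem_ball_self (by positivity))).ne'
          ((measure_mono inter_subset_right).trans_lt measure_ball_lt_top).ne
      simpa only [heq] using tendsto_const_nhds
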